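/- Let h : ℝⁿ → ℝ be differentiable with L-Lipschitz gradient and strongly quasiconvex with modulus γ > 0, with minimizer x̄. Fix η > 1 and 0 < β < γ/(ηL²). Given any y ∈ ℝⁿ, let x⁺ := y - β∇h(y). Then ‖x⁺ - x̄‖² + μ₂‖x⁺ - y‖² ≤ μ₁‖y - x̄‖², where μ₁ := 1/(1 + β(γ - ηβL²)) ∈ (0,1) and μ₂ := (1 - 1/η)/(1 + β(γ - ηβL²)) > 0. -/

import Mathlib

open InnerProductSpace

lemma grad_ineq
    {n : ℕ} (h : EuclideanSpace ℝ (Fin n) → ℝ)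
    (g : EuclideanSpace ℝ (Fin n) → EuclideanSpace ℝ (Fin n))
    (hgrad : ∀ x, HasGradientAt h (g x) x)
    (γ : ℝ)
    (hsq : ∀ x y : EuclideanSpace ℝ (Fin n), ∀ lam : ℝ, lam ∈ Set.Icc (0:ℝ) 1 →
      h (lam • y + (1 - lam) • x) ≤
        max (h y) (h x) - lam * (1 - lam) * (γ / 2) * ‖x - y‖ ^ 2)
    (xbar : EuclideanSpace ℝ (Fin n)) (hmin : ∀ x, h xbar ≤ h x)
    (z : EuclideanSpace ℝ (Fin n)) :
    γ / 2 * ‖z - xbar‖ ^ 2 ≤ inner ℝ (g z) (z - xbar) := by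
  set c : ℝ := γ / 2 * ‖z - xbar‖ ^ 2 with hc
  set φ : ℝ → ℝ := fun t => h (z + t • (xbar - z)) with hφdef
  have hcurve : HasDerivAt (fun t : ℝ => z + t • (xbar - z)) (xbar - z) 0 := by
    simpa using ((hasDerivAt_id (0:ℝ)).smul_const (xbar - z)).const_add z
  have hz0 : z + (0:ℝ) • (xbar - z) = z := by simp
  have hφ : HasDerivAt φ (inner ℝ (g z) (xbar - z) : ℝ) 0 := by
    have hF : HasFDerivAt h (toDual ℝ _ (g z)) z := (hgrad z).hasFDerivAt
    have hF' : HasFDerivAt h (toDual ℝ _ (g z)) ((fun t : ℝ => z + t • (xbar - z)) 0) := by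
      simpa using hF
    have := hF'.comp_hasDerivAt 0 hcurve
    simp only [toDual_apply_apply] at this
    exact this
  have hslope : Filter.Tendsto (slope φ 0) (nhdsWithin 0 (Set.Ioi 0))
      (nhds (inner ℝ (g z) (xbar - z) : ℝ)) := by
    exact (hasDerivAt_iff_tendsto_slope.mp hφ).mono_left
      (nhdsWithin_mono _ (fun x hx => ne_of_gt hx))
  have hbound : ∀ᶠ t in nhdsWithin 0 (Set.Ioi 0), slope φ 0 t ≤ -(1 - t) * c := by
    filter_upwards [Ioo_mem_nhdsGT_of_mem (by norm_num : (0:ℝ) ∈ Set.Ico (0:ℝ) 1)] with t ht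
    have ht0 : 0 < t := ht.1
    have ht1 : t < 1 := ht.2
    have hs := hsq z xbar t ⟨le_of_lt ht0, le_of_lt ht1⟩
    rw [max_eq_right (hmin z)] at hs
    have heq : t • xbar + (1 - t) • z = z + t • (xbar - z) := by
      rw [smul_sub, sub_smul, one_smul]; abel
    rw [heq] at hs
    have hφt : φ t ≤ φ 0 - t * (1 - t) * c := by
      simpa [hφdef, hz0, hc, mul_assoc] using hs
    have hsl : slope φ 0 t = (φ t - φ 0) / t := by
      simp [slope_def_field]
    rw [hsl, div_le_iff₀ ht0]
    nlinarith
  have hlin : Filter.Tendsto (fun t : ℝ => -(1 - t) * c) (nhdsWithin 0 (Set.Ioi 0))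
      (nhds (-c)) := by
    have : Filter.Tendsto (fun t : ℝ => -(1 - t) * c) (nhds 0) (nhds (-(1 - 0) * c)) := by
      exact (Continuous.tendsto (by continuity) 0)
    simpa using this.mono_left nhdsWithin_le_nhds
  have hle : (inner ℝ (g z) (xbar - z) : ℝ) ≤ -c :=
    le_of_tendsto_of_tendsto hslope hlin hbound
  have : (inner ℝ (g z) (z - xbar) : ℝ) = -(inner ℝ (g z) (xbar - z) : ℝ) := by
    rw [← inner_neg_right, neg_sub]
  linarith [this ▸ neg_le_neg hle]

theorem gradient_step_contraction
    {n : ℕ} (h : EuclideanSpace ℝ (Fin n) → ℝ)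
    (g : EuclideanSpace ℝ (Fin n) → EuclideanSpace ℝ (Fin n))
    (hgrad : ∀ x, HasGradientAt h (g x) x)
    (L : ℝ) (hL : 0 < L) (hLip : ∀ x y, ‖g x - g y‖ ≤ L * ‖x - y‖)
    (γ : ℝ) (hγ : 0 < γ)
    (hsq : ∀ x y : EuclideanSpace ℝ (Fin n), ∀ lam : ℝ, lam ∈ Set.Icc (0:ℝ) 1 →
      h (lam • y + (1 - lam) • x) ≤
        max (h y) (h x) - lam * (1 - lam) * (γ / 2) * ‖x - y‖ ^ 2)
    (xbar : EuclideanSpace ℝ (Fin n)) (hmin : ∀ x, h xbar ≤ h x)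
    (η β : ℝ) (hη : 1 < η) (hβ : 0 < β) (hβ' : β < γ / (η * L ^ 2))
    (μ₁ μ₂ : ℝ) (hμ₁ : μ₁ = 1 / (1 + β * (γ - η * β * L ^ 2)))
    (hμ₂ : μ₂ = (1 - 1 / η) / (1 + β * (γ - η * β * L ^ 2))) :
    (0 < μ₁ ∧ μ₁ < 1) ∧ 0 < μ₂ ∧
    ∀ y : EuclideanSpace ℝ (Fin n),
      ‖(y - β • g y) - xbar‖ ^ 2 + μ₂ * ‖(y - β • g y) - y‖ ^ 2 ≤ μ₁ * ‖y - xbar‖ ^ 2 := by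
  have hη0 : (0:ℝ) < η := lt_trans one_pos hη
  have hηL : 0 < η * L ^ 2 := by positivity
  have hgam : η * β * L ^ 2 < γ := by
    have := (lt_div_iff₀ hηL).mp hβ'
    nlinarith
  set D : ℝ := 1 + β * (γ - η * β * L ^ 2) with hD
  have hD1 : 1 < D := by nlinarith
  have hD0 : 0 < D := lt_trans one_pos hD1
  clear_value D
  have hμ₁pos : 0 < μ₁ := by rw [hμ₁]; positivity
  have hμ₁lt : μ₁ < 1 := by rw [hμ₁]; rw [div_lt_one hD0]; exact hD1
  have hμ₂pos : 0 < μ₂ := by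
    rw [hμ₂]
    have : 0 < 1 - 1 / η := by
      have : 1 / η < 1 := by rw [div_lt_one hη0]; exact hη
      linarith
    positivity
  refine ⟨⟨hμ₁pos, hμ₁lt⟩, hμ₂pos, fun y => ?_⟩
  set xp := y - β • g y with hxp
  set u := xp - xbar with hu
  set w := y - xbar with hw
  set vv := xp - y with hvv
  have hvvval : vv = -(β • g y) := by rw [hvv, hxp]; abel
  have huvw : u = vv + w := by rw [hu, hvv, hw]; abel
  -- expansion
  have h1 : ‖u‖ ^ 2 = ‖w‖ ^ 2 - ‖vv‖ ^ 2 + 2 * (inner ℝ vv u : ℝ) := by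
    have e1 : ‖u‖ ^ 2 = ‖vv‖ ^ 2 + 2 * (inner ℝ vv w : ℝ) + ‖w‖ ^ 2 := by
      rw [huvw]; exact norm_add_sq_real vv w
    have e2 : (inner ℝ vv u : ℝ) = ‖vv‖ ^ 2 + (inner ℝ vv w : ℝ) := by
      rw [huvw, inner_add_right, real_inner_self_eq_norm_sq]
    linarith
  have h2 : (inner ℝ vv u : ℝ) = -β * (inner ℝ (g y) u : ℝ) := by
    rw [hvvval, inner_neg_left, real_inner_smul_left]; ring
  have h3 : (inner ℝ (g y) u : ℝ) = (inner ℝ (g xp) u : ℝ) + (inner ℝ (g y - g xp) u : ℝ) := by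
    rw [inner_sub_left]; ring
  have h4 : γ / 2 * ‖u‖ ^ 2 ≤ (inner ℝ (g xp) u : ℝ) :=
    grad_ineq h g hgrad γ hsq xbar hmin xp
  have h5 : -(L * ‖vv‖ * ‖u‖) ≤ (inner ℝ (g y - g xp) u : ℝ) := by
    have habs := abs_real_inner_le_norm (g y - g xp) u
    have hlip := hLip y xp
    have hnrm : ‖y - xp‖ = ‖vv‖ := by rw [hvv, norm_sub_rev]
    have hnn : ‖g y - g xp‖ * ‖u‖ ≤ L * ‖vv‖ * ‖u‖ := by
      apply mul_le_mul_of_nonneg_right _ (norm_nonneg u)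
      rw [← hnrm]; exact hlip
    have hneg := neg_le_of_abs_le habs
    linarith
  have h6 : 2 * β * L * ‖vv‖ * ‖u‖ ≤ η * β ^ 2 * L ^ 2 * ‖u‖ ^ 2 + ‖vv‖ ^ 2 * η⁻¹ := by
    have base := two_mul_le_add_sq (η * β * L * ‖u‖) ‖vv‖
    have e1 : 2 * β * L * ‖vv‖ * ‖u‖ = (2 * (η * β * L * ‖u‖) * ‖vv‖) / η := by
      field_simp
    have e2 : η * β ^ 2 * L ^ 2 * ‖u‖ ^ 2 + ‖vv‖ ^ 2 * η⁻¹
        = ((η * β * L * ‖u‖) ^ 2 + ‖vv‖ ^ 2) / η := by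
      field_simp
    rw [e1, e2]
    exact div_le_div_of_nonneg_right base hη0.le |>.trans_eq rfl
  -- key inequality
  have key : D * ‖u‖ ^ 2 + (1 - η⁻¹) * ‖vv‖ ^ 2 ≤ ‖w‖ ^ 2 := by
    have m4 := mul_le_mul_of_nonneg_left h4 hβ.le
    have m5 := mul_le_mul_of_nonneg_left h5 hβ.le
    have c1 : (inner ℝ vv u : ℝ) ≤ -(β * (γ / 2 * ‖u‖ ^ 2)) + β * (L * ‖vv‖ * ‖u‖) := by
      rw [h2, h3]
      have : -β * ((inner ℝ (g xp) u : ℝ) + (inner ℝ (g y - g xp) u : ℝ))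
          = -(β * (inner ℝ (g xp) u : ℝ)) - β * (inner ℝ (g y - g xp) u : ℝ) := by ring
      rw [this]
      have e5 : β * -(L * ‖vv‖ * ‖u‖) = -(β * (L * ‖vv‖ * ‖u‖)) := by ring
      rw [e5] at m5
      linarith
    rw [hD]
    linarith [h1, c1, h6]
  rw [hμ₁, hμ₂, ← sub_nonneg]
  have e : 1 / D * ‖w‖ ^ 2 - (‖u‖ ^ 2 + (1 - 1 / η) / D * ‖vv‖ ^ 2) =
      (‖w‖ ^ 2 - (D * ‖u‖ ^ 2 + (1 - η⁻¹) * ‖vv‖ ^ 2)) / D := by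
    field_simp
  rw [e]
  exact div_nonneg (by linarith) hD0.le
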